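/- (Two-zonotope fusion inclusion) Let ⟨x̂₁, R₁⟩ and ⟨x̂₂, R₂⟩ be zonotopes in ℝⁿ, and let M ∈ ℝ^{n×n}. Define x̂ = x̂₁ + M(x̂₂ − x̂₁) and R = [(I − M)R₁, M R₂]. Then ⟨x̂₁, R₁⟩ ∩ ⟨x̂₂, R₂⟩ ⊆ ⟨x̂, R⟩. -/

import Mathlib

open Matrix

/-- The zonotope with center `c` and generator matrix `R`. -/
def zonotope {d ι : Type*} [Fintype ι] (c : d → ℝ) (R : Matrix d ι ℝ) :
    Set (d → ℝ) :=
  {z | ∃ u : ι → ℝ, (∀ j, |u j| ≤ 1) ∧ z = c + R.mulVec u}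

theorem two_zonotope_fusion_inclusion
    {n r₁ r₂ : ℕ} (x₁ x₂ : Fin n → ℝ)
    (R₁ : Matrix (Fin n) (Fin r₁) ℝ) (R₂ : Matrix (Fin n) (Fin r₂) ℝ)
    (M : Matrix (Fin n) (Fin n) ℝ) :
    zonotope x₁ R₁ ∩ zonotope x₂ R₂ ⊆
      zonotope (x₁ + M.mulVec (x₂ - x₁))
        (Matrix.fromCols ((1 - M) * R₁) (M * R₂)) := by
  rintro z ⟨⟨u₁, hu₁, h₁⟩, ⟨u₂, hu₂, h₂⟩⟩
  refine ⟨Sum.elim u₁ u₂, fun j => by cases j <;> simp [hu₁, hu₂], ?_⟩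
  rw [Matrix.fromCols_mulVec_sumElim, ← Matrix.mulVec_mulVec,
    ← Matrix.mulVec_mulVec, Matrix.sub_mulVec, Matrix.one_mulVec]
  have hz : x₂ - x₁ + R₂.mulVec u₂ - R₁.mulVec u₁ = 0 := by
    have e : x₁ + R₁.mulVec u₁ = x₂ + R₂.mulVec u₂ := h₁.symm.trans h₂
    funext i
    have h := congrFun e i
    simp only [Pi.add_apply, Pi.sub_apply, Pi.zero_apply] at *
    linarith
  have hM : M.mulVec (x₂ - x₁) + M.mulVec (R₂.mulVec u₂)
      - M.mulVec (R₁.mulVec u₁) = 0 := by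
    rw [← Matrix.mulVec_add, ← Matrix.mulVec_sub, hz, Matrix.mulVec_zero]
  rw [h₁]
  funext i
  have h := congrFun hM i
  simp only [Pi.add_apply, Pi.sub_apply, Pi.zero_apply] at *
  linarith
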